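/- The subgroup Γ = φ⁻¹(Stab(1)) of SL₂(ℤ) contains no element of order 4 (equivalently, its image in PSL₂(ℤ) contains no element of order 2, reflecting the absence of elliptic points of order two). -/

import Mathlib

/-- The transposition `(a, b)` in cycle notation. -/
def c2 (a b : Fin 100) : Equiv.Perm (Fin 100) := Equiv.swap a b

/-- The 3-cycle `(a, b, c)` in cycle notation (sending `a ↦ b ↦ c ↦ a`). -/
def c3 (a b c : Fin 100) : Equiv.Perm (Fin 100) := Equiv.swap a c * Equiv.swap a b

/-- The permutation σ₀ (points `1,…,100` are encoded in `Fin 100`, with `100` encoded as `0`). -/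
def sigma0 : Equiv.Perm (Fin 100) :=
    c2 1 84 * c2 2 20 * c2 3 48 * c2 4 56 *
    c2 5 82 * c2 6 67 * c2 7 55 * c2 8 41 *
    c2 9 35 * c2 10 40 * c2 11 78 * c2 12 100 *
    c2 13 49 * c2 14 37 * c2 15 94 * c2 16 76 *
    c2 17 19 * c2 18 44 * c2 21 34 * c2 22 85 *
    c2 23 92 * c2 24 57 * c2 25 75 * c2 26 28 *
    c2 27 64 * c2 29 90 * c2 30 97 * c2 31 38 *
    c2 32 68 * c2 33 69 * c2 36 53 * c2 39 61 *
    c2 42 73 * c2 43 91 * c2 45 86 * c2 46 81 *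
    c2 47 89 * c2 50 93 * c2 51 96 * c2 52 72 *
    c2 54 74 * c2 58 99 * c2 59 95 * c2 60 63 *
    c2 62 83 * c2 65 70 * c2 66 88 * c2 71 87 *
    c2 77 98 * c2 79 80

/-- The permutation σ₁ (points `1,…,100` are encoded in `Fin 100`, with `100` encoded as `0`). -/
def sigma1 : Equiv.Perm (Fin 100) :=
    c3 1 80 22 * c3 2 9 11 * c3 3 53 87 * c3 4 23 78 *
    c3 5 51 18 * c3 6 37 24 * c3 8 27 60 * c3 10 62 47 *
    c3 12 65 31 * c3 13 64 19 * c3 14 61 52 * c3 15 98 25 *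
    c3 16 73 32 * c3 17 39 33 * c3 20 97 58 * c3 21 96 67 *
    c3 26 93 99 * c3 28 57 35 * c3 29 71 55 * c3 30 69 45 *
    c3 34 86 82 * c3 38 59 94 * c3 40 43 91 * c3 42 68 44 *
    c3 46 85 89 * c3 48 76 90 * c3 49 92 77 * c3 50 66 88 *
    c3 54 95 56 * c3 63 74 72 * c3 70 81 75 * c3 79 100 83

/-- `φ⁻¹(Stab(1))`, the preimage in `SL₂(ℤ)` of the stabilizer of the point `1`. -/
def Gamma' (phi : Matrix.SpecialLinearGroup (Fin 2) ℤ →* Equiv.Perm (Fin 100)) :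
    Subgroup (Matrix.SpecialLinearGroup (Fin 2) ℤ) :=
  Subgroup.comap phi (MulAction.stabilizer (Equiv.Perm (Fin 100)) (1 : Fin 100))



open Matrix ModularGroup

abbrev SL2 := Matrix.SpecialLinearGroup (Fin 2) ℤ

def mkE (a b c : ℤ) (h : a^2 + b*c = -1) : SL2 :=
  ⟨!![a, b; c, -a], by simp [Matrix.det_fin_two_of]; linear_combination -h⟩

lemma mkE_congr {a b c a' b' c' : ℤ} (ha : a = a') (hb : b = b') (hc : c = c')
    (h : a^2 + b*c = -1) (h' : a'^2 + b'*c' = -1) : mkE a b c h = mkE a' b' c' h' := by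
  subst ha; subst hb; subst hc; rfl

lemma mkE_eq_S (h : (0:ℤ)^2 + (-1)*1 = -1) : mkE 0 (-1) 1 h = S := rfl

lemma conj_T (k a b c : ℤ) (h : a^2 + b*c = -1) :
    T^k * mkE a b c h * (T^k)⁻¹ =
      mkE (a+k*c) (b - 2*k*a - k^2*c) c (by linear_combination h) := by
  rw [mul_inv_eq_iff_eq_mul]
  apply Subtype.ext
  rw [Matrix.SpecialLinearGroup.coe_mul, Matrix.SpecialLinearGroup.coe_mul]
  simp only [Matrix.SpecialLinearGroup.coe_mul, coe_T_zpow, mkE, Matrix.mul_fin_two]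
  congrm !![?_, ?_; ?_, ?_] <;> ring

lemma conj_S (a b c : ℤ) (h : a^2 + b*c = -1) :
    S * mkE a b c h * S⁻¹ = mkE (-a) (-c) (-b) (by linear_combination h) := by
  rw [mul_inv_eq_iff_eq_mul]
  apply Subtype.ext
  rw [Matrix.SpecialLinearGroup.coe_mul, Matrix.SpecialLinearGroup.coe_mul]
  simp only [Matrix.SpecialLinearGroup.coe_mul, coe_S, mkE, Matrix.mul_fin_two]
  congrm !![?_, ?_; ?_, ?_] <;> ring

lemma descent (n : ℕ) : ∀ a b : ℤ, ∀ h : a^2 + b*(n:ℤ) = -1, 0 < n →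
    ∃ B : SL2, B * mkE a b n h * B⁻¹ = S := by
  induction n using Nat.strong_induction_on with
  | _ n ih =>
    intro a b h hn
    have hc0 : (0:ℤ) < n := by exact_mod_cast hn
    obtain ⟨k, hk1, hk2⟩ : ∃ k : ℤ, -(n:ℤ) < 2*(a+k*n) ∧ 2*(a+k*n) ≤ n := by
      have hdiv : (n:ℤ) * (a / n) + a % n = a := Int.mul_ediv_add_emod a n
      have h1 : 0 ≤ a % (n:ℤ) := Int.emod_nonneg a (by omega)
      have h2 : a % (n:ℤ) < n := Int.emod_lt_of_pos a hc0
      by_cases hc : 2*(a % (n:ℤ)) ≤ n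
      · exact ⟨-(a / n), by constructor <;> nlinarith⟩
      · exact ⟨-(a / n) - 1, by constructor <;> nlinarith⟩
    set a' := a + k*n with ha'
    set b' := b - 2*k*a - k^2*n with hb'
    have h' : a'^2 + b'*(n:ℤ) = -1 := by rw [ha', hb']; linear_combination h
    have key1 : T^k * mkE a b n h * (T^k)⁻¹ = mkE a' b' n h' := conj_T k a b n h
    by_cases hn1 : n = 1
    · subst hn1
      have ha0 : a' = 0 := by push_cast at hk1 hk2; omega
      have hb0 : b' = -1 := by push_cast at h'; rw [ha0] at h'; linarith
      refine ⟨T^k, ?_⟩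
      rw [key1, mkE_congr ha0 hb0 (by norm_num : ((1:ℕ):ℤ) = 1) h' (by norm_num)]
      exact mkE_eq_S _
    · have hn2 : 2 ≤ n := by omega
      have key2 : S * mkE a' b' n h' * S⁻¹ = mkE (-a') (-(n:ℤ)) (-b') (by linear_combination h') :=
        conj_S a' b' n h'
      have hmul : (n:ℤ) * (-b') = 1 + a'^2 := by linear_combination -h'
      have hbpos : 0 < -b' := by nlinarith [sq_nonneg a']
      have hblt : -b' < (n:ℤ) := by nlinarith [sq_nonneg a', sq_nonneg (2*a')]
      set m : ℕ := (-b').toNat with hm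
      have hmz : ((m:ℕ):ℤ) = -b' := Int.toNat_of_nonneg hbpos.le
      have hmlt : m < n := by omega
      have hmpos : 0 < m := by omega
      have h'' : (-a')^2 + (-(n:ℤ))*(m:ℤ) = -1 := by rw [hmz]; linear_combination h'
      obtain ⟨B, hB⟩ := ih m hmlt (-a') (-(n:ℤ)) h'' hmpos
      refine ⟨B * S * T^k, ?_⟩
      have expand : (B * S * T^k) * mkE a b n h * (B * S * T^k)⁻¹ =
          B * (S * (T^k * mkE a b n h * (T^k)⁻¹) * S⁻¹) * B⁻¹ := by group
      rw [expand, key1, key2,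
        mkE_congr rfl rfl hmz.symm (by linear_combination h') (by rw [hmz]; linear_combination h'),
        hB]

lemma sq_eq_one' (δ : SL2) (hδ : δ * δ = 1) : δ = 1 ∨ δ = -1 := by
  have hm : (δ.1) * (δ.1) = (1 : Matrix (Fin 2) (Fin 2) ℤ) := by
    have := congrArg Subtype.val hδ
    simpa using this
  set a := δ.1 0 0; set b := δ.1 0 1; set c := δ.1 1 0; set d := δ.1 1 1
  have hdet : a * d - b * c = 1 := by
    have := δ.2; rwa [Matrix.det_fin_two] at this
  have e00 : a * a + b * c = 1 := by
    have := congrFun (congrFun hm 0) 0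
    simpa [Matrix.mul_apply, Fin.sum_univ_succ] using this
  have e01 : a * b + b * d = 0 := by
    have := congrFun (congrFun hm 0) 1
    simpa [Matrix.mul_apply, Fin.sum_univ_succ] using this
  have e10 : c * a + d * c = 0 := by
    have := congrFun (congrFun hm 1) 0
    simpa [Matrix.mul_apply, Fin.sum_univ_succ] using this
  have e11 : c * b + d * d = 1 := by
    have := congrFun (congrFun hm 1) 1
    simpa [Matrix.mul_apply, Fin.sum_univ_succ] using this
  by_cases had : a + d = 0
  · exfalso
    have : d = -a := by linarith
    rw [this] at hdet
    nlinarith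
  · have hb : b = 0 := by
      rcases mul_eq_zero.mp (show b * (a + d) = 0 by linarith [e01]) with h | h
      · exact h
      · exact absurd h had
    have hc : c = 0 := by
      rcases mul_eq_zero.mp (show c * (a + d) = 0 by linarith [e10]) with h | h
      · exact h
      · exact absurd h had
    rw [hb, hc] at e00 hdet
    rcases mul_self_eq_one_iff.mp (by linarith : a * a = 1) with ha | ha
    · left
      apply Subtype.ext
      have heta : δ.1 = !![a, b; c, d] := Matrix.eta_fin_two δ.1
      have hd : d = 1 := by rw [ha] at hdet; linarith
      rw [heta, ha, hb, hc, hd, Matrix.SpecialLinearGroup.coe_one, Matrix.one_fin_two]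
    · right
      apply Subtype.ext
      have heta : δ.1 = !![a, b; c, d] := Matrix.eta_fin_two δ.1
      have hd : d = -1 := by rw [ha] at hdet; linarith
      rw [heta, ha, hb, hc, hd, Matrix.SpecialLinearGroup.coe_neg,
        Matrix.SpecialLinearGroup.coe_one, Matrix.one_fin_two]
      norm_num

lemma sq_eq_neg_one_conj (γ : SL2) (hγ : γ * γ = -1) :
    ∃ B : SL2, B * γ * B⁻¹ = S ∨ B * γ * B⁻¹ = -S := by
  have hm : (γ.1) * (γ.1) = -(1 : Matrix (Fin 2) (Fin 2) ℤ) := by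
    have := congrArg Subtype.val hγ
    simpa [Matrix.SpecialLinearGroup.coe_neg] using this
  set a := γ.1 0 0 with ha'
  set b := γ.1 0 1 with hb'
  set c := γ.1 1 0 with hc'
  set d := γ.1 1 1 with hd'
  have hdet : a * d - b * c = 1 := by
    have := γ.2; rwa [Matrix.det_fin_two] at this
  have e00 : a * a + b * c = -1 := by
    have := congrFun (congrFun hm 0) 0
    simpa [Matrix.mul_apply, Fin.sum_univ_succ] using this
  have e01 : a * b + b * d = 0 := by
    have := congrFun (congrFun hm 0) 1
    simpa [Matrix.mul_apply, Fin.sum_univ_succ] using this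
  have e10 : c * a + d * c = 0 := by
    have := congrFun (congrFun hm 1) 0
    simpa [Matrix.mul_apply, Fin.sum_univ_succ] using this
  have had : d = -a := by
    by_cases h0 : a + d = 0
    · linarith
    · exfalso
      have hb : b = 0 := by
        rcases mul_eq_zero.mp (show b * (a + d) = 0 by linarith [e01]) with h | h
        · exact h
        · exact absurd h h0
      have hc : c = 0 := by
        rcases mul_eq_zero.mp (show c * (a + d) = 0 by linarith [e10]) with h | h
        · exact h
        · exact absurd h h0
      rw [hb, hc] at e00
      nlinarith
  have hrel : a^2 + b*c = -1 := by nlinarith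
  have heta : γ = mkE a b c hrel := by
    apply Subtype.ext
    have : γ.1 = !![a, b; c, d] := Matrix.eta_fin_two γ.1
    rw [this, had]; rfl
  have hcne : c ≠ 0 := by
    intro h0; rw [h0] at hrel; nlinarith
  rcases lt_or_gt_of_ne hcne with hcneg | hcpos
  · -- c < 0 : use -γ
    have hrel' : (-a)^2 + (-b)*(-c) = -1 := by linear_combination hrel
    have hneg : -γ = mkE (-a) (-b) (-c) hrel' := by
      rw [heta]
      apply Subtype.ext
      rw [Matrix.SpecialLinearGroup.coe_neg]
      simp only [Matrix.SpecialLinearGroup.coe_neg, mkE]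
      norm_num
    set m : ℕ := (-c).toNat with hm
    have hmz : ((m:ℕ):ℤ) = -c := Int.toNat_of_nonneg (by omega)
    have h'' : (-a)^2 + (-b)*(m:ℤ) = -1 := by rw [hmz]; linear_combination hrel
    obtain ⟨B, hB⟩ := descent m (-a) (-b) h'' (by omega)
    refine ⟨B, Or.inr ?_⟩
    have : B * (-γ) * B⁻¹ = S := by
      rw [hneg, mkE_congr rfl rfl hmz.symm hrel' h'']
      exact hB
    calc B * γ * B⁻¹ = -(B * (-γ) * B⁻¹) := by
          simp [mul_neg, neg_mul]
      _ = -S := by rw [this]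
  · set m : ℕ := c.toNat with hm
    have hmz : ((m:ℕ):ℤ) = c := Int.toNat_of_nonneg (by omega)
    have h'' : a^2 + b*(m:ℤ) = -1 := by rw [hmz]; exact hrel
    obtain ⟨B, hB⟩ := descent m a b h'' (by omega)
    refine ⟨B, Or.inl ?_⟩
    rw [heta, mkE_congr rfl rfl hmz.symm hrel h'']
    exact hB

set_option maxRecDepth 10000

lemma sigma0_no_fix : ∀ x : Fin 100, sigma0 x ≠ x := by decide

lemma sigma0_sq : sigma0 * sigma0 = 1 := Equiv.ext (by decide)

lemma S_mul_S : ModularGroup.S * ModularGroup.S = (-1 : SL2) :=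
  Subtype.ext (by
    simpa [Matrix.SpecialLinearGroup.coe_mul, Matrix.SpecialLinearGroup.coe_neg] using
      ModularGroup.S_mul_S_eq)

/-- `Γ = φ⁻¹(Stab(1))` contains no element of order 4 (its image in `PSL₂(ℤ)` contains no
element of order 2: there are no elliptic points of order two). -/
theorem Gamma_no_order_four
    (phi : Matrix.SpecialLinearGroup (Fin 2) ℤ →* Equiv.Perm (Fin 100))
    (hS : phi ModularGroup.S = sigma0)
    (hST : phi (ModularGroup.S * ModularGroup.T) = sigma1) :
    ∀ γ ∈ Gamma' phi, orderOf γ ≠ 4 := by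
  intro γ hγ h4
  have hfix : phi γ (1 : Fin 100) = 1 := hγ
  have hpow : γ^(4:ℕ) = 1 := by rw [← h4]; exact pow_orderOf_eq_one γ
  have hne : γ^(2:ℕ) ≠ 1 := by
    intro he
    have hd := orderOf_dvd_of_pow_eq_one he
    rw [h4] at hd
    exact absurd (Nat.le_of_dvd (by norm_num) hd) (by norm_num)
  have hsq : γ * γ = -1 := by
    have h22 : (γ^(2:ℕ)) * (γ^(2:ℕ)) = 1 := by rw [← pow_add]; exact hpow
    rcases sq_eq_one' (γ^(2:ℕ)) h22 with h | h
    · exact absurd h hne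
    · calc γ * γ = γ^(2:ℕ) := (pow_two γ).symm
        _ = -1 := h
  have hphiS3 : phi (-ModularGroup.S) = sigma0 := by
    have hmS : -ModularGroup.S = ModularGroup.S * ModularGroup.S * ModularGroup.S := by
      rw [S_mul_S]; simp
    rw [hmS, _root_.map_mul, _root_.map_mul, hS]
    rw [show sigma0 * sigma0 * sigma0 = (sigma0 * sigma0) * sigma0 from rfl, sigma0_sq, one_mul]
  obtain ⟨B, hB⟩ := sq_eq_neg_one_conj γ hsq
  have hphi : phi γ = (phi B)⁻¹ * sigma0 * (phi B) := by
    rcases hB with hB | hB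
    · have hγS : γ = B⁻¹ * ModularGroup.S * B := by rw [← hB]; group
      rw [hγS, _root_.map_mul, _root_.map_mul, map_inv, hS]
    · have hγS : γ = B⁻¹ * (-ModularGroup.S) * B := by rw [← hB]; group
      rw [hγS, _root_.map_mul, _root_.map_mul, map_inv, hphiS3]
  have h1 : ((phi B)⁻¹ * sigma0 * phi B) (1 : Fin 100) = 1 := by rw [← hphi]; exact hfix
  have hx : sigma0 ((phi B) 1) = (phi B) 1 := by
    have h2 := congrArg (phi B) h1
    simpa [Equiv.Perm.mul_apply] using h2
  exact sigma0_no_fix _ hx
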